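/- Let X be a finite poset, R a commutative unital ring, and x < y in X. For A ⊆ X let e_A ∈ I(X,R) be the diagonal idempotent with e_A(u,u)=1 for u ∈ A and all other values 0, and let C(e_A) = {f ∈ I(X,R) : f e_A = e_A f}. Then the intersection of C(e_A) over all subsets A ⊆ X containing both x and y equals D(X,R) ⊕ ⟨e_{xy}⟩; equivalently, f lies in this intersection if and only if f = f_D + f(x,y) e_{xy}. -/

import Mathlib

open IncidenceAlgebra
open scoped Classical

/-- A poset is connected if any two elements can be joined by a sequence of elements
in which consecutive elements are comparable. -/
def PosetConnected (X : Type*) [PartialOrder X] : Prop :=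
  ∀ x y : X, Relation.ReflTransGen (fun a b : X => a ≤ b ∨ b ≤ a) x y

/-- The standard basis element `e_{xy}` of the incidence algebra (for `x ≤ y`):
the function taking value `1` at `(x, y)` and `0` elsewhere. -/
def eSingle {R : Type*} [Zero R] [One R] {X : Type*} [PartialOrder X] [DecidableEq X]
    (x y : X) (hxy : x ≤ y) : IncidenceAlgebra R X where
  toFun u v := if u = x ∧ v = y then 1 else 0
  eq_zero_of_not_le' u v huv := by
    show (if u = x ∧ v = y then (1 : R) else 0) = 0
    split_ifs with hc
    · obtain ⟨rfl, rfl⟩ := hc; exact absurd hxy huv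
    · rfl

/-- The diagonal part `f_D` of an element of the incidence algebra. -/
def diagPart {R : Type*} [Zero R] {X : Type*} [PartialOrder X] [DecidableEq X]
    (f : IncidenceAlgebra R X) : IncidenceAlgebra R X where
  toFun u v := if u = v then f u v else 0
  eq_zero_of_not_le' u v huv := by
    show (if u = v then f u v else 0) = 0
    exact if_neg fun h => huv (le_of_eq h)

/-- The diagonal idempotent `e_A` associated to a subset `A ⊆ X`:
`e_A (x, x) = 1` for `x ∈ A` and all other values are `0`. -/
noncomputable def eSet {R : Type*} [Zero R] [One R] {X : Type*} [PartialOrder X]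
    (A : Set X) : IncidenceAlgebra R X where
  toFun u v :=
    letI := Classical.propDecidable (u = v ∧ u ∈ A)
    if u = v ∧ u ∈ A then 1 else 0
  eq_zero_of_not_le' u v huv := by
    try dsimp only
    rw [if_neg]
    rintro ⟨rfl, -⟩
    exact huv le_rfl



section helpers
variable {X : Type*} [PartialOrder X] [LocallyFiniteOrder X]
    {R : Type*} [CommRing R]

omit [LocallyFiniteOrder X] in
lemma eSet_apply (A : Set X) (u v : X) :
    (eSet A : IncidenceAlgebra R X) u v =
      letI := Classical.propDecidable (u = v ∧ u ∈ A)
      if u = v ∧ u ∈ A then 1 else 0 := rfl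

omit [LocallyFiniteOrder X] in
lemma eSet_apply' (A : Set X) (u v : X) [Decidable (u = v ∧ u ∈ A)] :
    (eSet A : IncidenceAlgebra R X) u v = if u = v ∧ u ∈ A then 1 else 0 := by
  have h := eSet_apply (R := R) A u v
  by_cases hc : u = v ∧ u ∈ A
  · rw [if_pos hc]; exact h.trans (if_pos hc)
  · rw [if_neg hc]; exact h.trans (if_neg hc)

lemma mul_eSet_apply (f : IncidenceAlgebra R X) (A : Set X) (u v : X) (huv : u ≤ v)
    [Decidable (v ∈ A)] :
    (f * (eSet A : IncidenceAlgebra R X)) u v = if v ∈ A then f u v else 0 := by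
  classical
  rw [mul_apply]
  rw [Finset.sum_congr rfl (fun z _ => show f u z * (eSet A : IncidenceAlgebra R X) z v
      = if z = v then (if v ∈ A then f u v else 0) else 0 by
    rw [eSet_apply']
    by_cases hz : z = v
    · subst hz
      by_cases hm : z ∈ A <;> simp [hm]
    · simp [hz])]
  rw [Finset.sum_ite_eq' (Finset.Icc u v) v, if_pos (Finset.mem_Icc.2 ⟨huv, le_rfl⟩)]

lemma eSet_mul_apply (f : IncidenceAlgebra R X) (A : Set X) (u v : X) (huv : u ≤ v)
    [Decidable (u ∈ A)] :
    ((eSet A : IncidenceAlgebra R X) * f) u v = if u ∈ A then f u v else 0 := by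
  classical
  rw [mul_apply]
  rw [Finset.sum_congr rfl (fun z _ => show (eSet A : IncidenceAlgebra R X) u z * f z v
      = if z = u then (if u ∈ A then f u v else 0) else 0 by
    rw [eSet_apply']
    by_cases hz : z = u
    · subst hz
      by_cases hm : z ∈ A <;> simp [hm, eq_comm]
    · rw [if_neg (fun h => hz h.1.symm), if_neg hz, zero_mul])]
  rw [Finset.sum_ite_eq' (Finset.Icc u v) u, if_pos (Finset.mem_Icc.2 ⟨le_rfl, huv⟩)]

end helpers

section apps
variable {X : Type*} [PartialOrder X] [DecidableEq X] {R : Type*} [CommRing R]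

lemma diagPart_apply (f : IncidenceAlgebra R X) (u v : X) :
    diagPart f u v = if u = v then f u v else 0 := rfl

lemma eSingle_apply (x y : X) (h : x ≤ y) (u v : X) :
    (eSingle x y h : IncidenceAlgebra R X) u v = if u = x ∧ v = y then 1 else 0 := rfl

end apps

/-- for `x < y` in a finite poset, an element lies in the centralizer of `e_A`
for every subset `A` containing `x` and `y` iff it equals its diagonal plus its `(x,y)` entry
times `e_{xy}`. -/
theorem stmt_11 {X : Type*} [PartialOrder X] [Fintype X] [LocallyFiniteOrder X] [DecidableEq X]
    {R : Type*} [CommRing R]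
    {x y : X} (hxy : x < y) (f : IncidenceAlgebra R X) :
    (∀ A : Set X, x ∈ A → y ∈ A → f * eSet A = eSet A * f) ↔
      f = diagPart f + f x y • eSingle x y hxy.le := by
  classical
  constructor
  · intro H
    have step : ∀ (A : Set X), x ∈ A → y ∈ A → ∀ u v : X, u ≤ v →
        (if v ∈ A then f u v else 0) = (if u ∈ A then f u v else 0) := by
      intro A hxA hyA u v huv
      have h := congrArg (fun g : IncidenceAlgebra R X => g u v) (H A hxA hyA)
      simpa only [mul_eSet_apply f A u v huv, eSet_mul_apply f A u v huv] using h
    have key : ∀ u v : X, u ≤ v → u ≠ v → ¬(u = x ∧ v = y) → f u v = 0 := by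
      intro u v huv hne hxyne
      by_cases hu : u = x ∨ u = y
      · have hvx : v ≠ x := by
          rintro rfl
          rcases hu with rfl | rfl
          · exact hne rfl
          · exact lt_irrefl _ (lt_of_lt_of_le hxy huv)
        have hvy : v ≠ y := by
          rintro rfl
          rcases hu with rfl | rfl
          · exact hxyne ⟨rfl, rfl⟩
          · exact hne rfl
        have h := step {x, y} (by simp) (by simp) u v huv
        rwa [if_neg (by simp [hvx, hvy]), if_pos (by simpa using hu), eq_comm] at h
      · push_neg at hu
        have h := step {x, y, v} (by simp) (by simp) u v huv
        rwa [if_pos (by simp), if_neg (by simp [hu.1, hu.2, hne])] at h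
    ext u v huv
    rw [IncidenceAlgebra.add_apply, diagPart_apply, constSMul_apply, eSingle_apply, smul_eq_mul]
    by_cases h1 : u = v
    · subst h1
      rw [if_pos rfl, if_neg (by rintro ⟨rfl, rfl⟩; exact hxy.ne rfl), mul_zero, add_zero]
    · by_cases h2 : u = x ∧ v = y
      · obtain ⟨rfl, rfl⟩ := h2
        rw [if_neg h1, if_pos ⟨rfl, rfl⟩, mul_one, zero_add]
      · rw [key u v huv h1 h2, if_neg h1, if_neg h2, mul_zero, add_zero]
  · intro hf A hxA hyA
    ext u v huv
    rw [mul_eSet_apply f A u v huv, eSet_mul_apply f A u v huv]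
    by_cases h1 : u = v
    · subst h1; rfl
    · by_cases h2 : u = x ∧ v = y
      · obtain ⟨rfl, rfl⟩ := h2
        rw [if_pos hyA, if_pos hxA]
      · have hz : f u v = 0 := by
          conv_lhs => rw [hf]
          rw [IncidenceAlgebra.add_apply, diagPart_apply, constSMul_apply, eSingle_apply, smul_eq_mul,
            if_neg h1, if_neg h2, mul_zero, add_zero]
        rw [hz]
        simp
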